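/- arXiv:1505.07960 — 4 statements merged into one kernel-verified Lean document; each statement's English description precedes it below -/
import Mathlib

section
/- Let (Ω, Σ, P) be a probability space, N ≥ 1, f : Ω → ℝ^N a random vector with square-integrable components, A an invertible real N×N matrix, B a real N×N matrix, u(ω) = A⁻¹ f(ω), and let the adjoint state p : Ω → ℝ^N be defined by the system Aᵀ p(ω) = −2 Bᵀ u(ω) (i.e. p(ω) = −2 (Aᵀ)⁻¹ Bᵀ u(ω)). Then the cross-correlation matrix Cor(u,p), with entries Cor(u,p)_{ij} = ∫_Ω u_i(ω) p_j(ω) P(dω), satisfies Cor(u,p) · A = −2 · Cor(u) · B. -/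
open MeasureTheory

/-- The cross-correlation matrix `Cor(u,p)` of the state `u` and the adjoint state `p`,
defined by `Aᵀ p = -2 Bᵀ u`, satisfies `Cor(u,p) · A = -2 · Cor(u) · B`. -/
theorem stmt_2 {Ω : Type*} [MeasurableSpace Ω] (P : Measure Ω) [IsProbabilityMeasure P]
    {N : ℕ} (hN : 1 ≤ N) (f : Ω → Fin N → ℝ)
    (hf : ∀ i, MemLp (fun ω => f ω i) 2 P)
    (A : Matrix (Fin N) (Fin N) ℝ) (hA : IsUnit A)
    (B : Matrix (Fin N) (Fin N) ℝ)
    (u p : Ω → Fin N → ℝ) (hu : ∀ ω, u ω = A⁻¹.mulVec (f ω))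
    (hp : ∀ ω, p ω = (-2 : ℝ) • (A.transpose)⁻¹.mulVec (B.transpose.mulVec (u ω))) :
    (Matrix.of fun i j => ∫ ω, u ω i * p ω j ∂P) * A =
      (-2 : ℝ) • ((Matrix.of fun i j => ∫ ω, u ω i * u ω j ∂P) * B) := by
  -- each component of u is in L²
  have hu2 : ∀ i, MemLp (fun ω => u ω i) 2 P := by
    intro i
    have : (fun ω => u ω i) = fun ω => ∑ k, A⁻¹ i k * f ω k := by
      funext ω; rw [hu ω]; rfl
    rw [this]
    have h := memLp_finset_sum' (μ := P) Finset.univ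
      (fun k (_ : k ∈ Finset.univ) => (hf k).const_mul (A⁻¹ i k))
    convert h using 1
    funext ω
    simp
  -- products are integrable
  have hint : ∀ i j, Integrable (fun ω => u ω i * u ω j) P := by
    intro i j
    have := ((hu2 j).smul (hu2 i) (p := 2) (q := 2) (r := 1)
      (hpqr := ⟨by simp [one_div, ENNReal.inv_two_add_inv_two]⟩))
    rw [memLp_one_iff_integrable] at this
    exact this
  -- set M := -2 • (Aᵀ)⁻¹ Bᵀ, so p ω = M.mulVec (u ω)
  set C : Matrix (Fin N) (Fin N) ℝ := Matrix.of fun i j => ∫ ω, u ω i * u ω j ∂P with hC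
  have key : (Matrix.of fun i j => ∫ ω, u ω i * p ω j ∂P)
      = (-2 : ℝ) • (C * B * A⁻¹) := by
    ext i j
    have hAinvT : (A.transpose)⁻¹ = (A⁻¹).transpose := (Matrix.transpose_nonsing_inv A).symm
    have hpij : ∀ ω, u ω i * p ω j
        = ∑ m, ((-2 : ℝ) * ((B * A⁻¹) m j)) * (u ω i * u ω m) := by
      intro ω
      rw [hp ω, hAinvT]
      simp only [Pi.smul_apply, smul_eq_mul, Matrix.mulVec, dotProduct,
        Matrix.transpose_apply, Matrix.mul_apply, Finset.mul_sum, Finset.sum_mul]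
      rw [Finset.sum_comm]
      exact Finset.sum_congr rfl fun m _ => Finset.sum_congr rfl fun k _ => by ring
    simp only [Matrix.smul_apply, Matrix.of_apply, Matrix.mul_apply, smul_eq_mul]
    calc (∫ ω, u ω i * p ω j ∂P)
        = ∫ ω, ∑ m, ((-2 : ℝ) * ((B * A⁻¹) m j)) * (u ω i * u ω m) ∂P := by
          congr 1; funext ω; exact hpij ω
      _ = ∑ m, ((-2 : ℝ) * ((B * A⁻¹) m j)) * ∫ ω, u ω i * u ω m ∂P := by
          rw [integral_finset_sum]
          · congr 1; funext m; rw [integral_const_mul]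
          · exact fun m _ => (hint i m).const_mul _
      _ = (-2 : ℝ) * ∑ m, (C i m) * ((B * A⁻¹) m j) := by
          rw [Finset.mul_sum]; congr 1; funext m
          simp only [hC, Matrix.of_apply]; ring
    simp only [Matrix.mul_apply, Finset.mul_sum, Finset.sum_mul, neg_mul]
    rw [Finset.sum_comm]
    exact Finset.sum_congr rfl fun m _ => Finset.sum_congr rfl fun k _ => by ring
  rw [key]
  have hdet : IsUnit A.det := (Matrix.isUnit_iff_isUnit_det A).mp hA
  rw [Matrix.smul_mul, Matrix.mul_assoc (C * B) A⁻¹ A,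
    Matrix.nonsing_inv_mul A hdet, Matrix.mul_one]
end

section
/- Let (X, μ) and (Y, ν) be σ-finite measure spaces such that L²(X, μ; ℝ) and L²(Y, ν; ℝ) are separable. If (φ_i)_{i ∈ I} is a Hilbert (orthonormal) basis of L²(X, μ; ℝ) and (ψ_j)_{j ∈ J} is a Hilbert basis of L²(Y, ν; ℝ), then the family of functions ((x,y) ↦ φ_i(x) ψ_j(y))_{(i,j) ∈ I × J} is a Hilbert basis of L²(X × Y, μ ⊗ ν; ℝ). -/
open MeasureTheory
open scoped RealInnerProductSpace

lemma aux_countable_of_orthonormal {E ι : Type*} [NormedAddCommGroup E]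
    [InnerProductSpace ℝ E] [TopologicalSpace.SeparableSpace E]
    {v : ι → E} (hv : Orthonormal ℝ v) : Countable ι := by
  refine Pairwise.countable_of_isOpen_disjoint (s := fun i => Metric.ball (v i) (1/2))
    ?_ (fun i => Metric.isOpen_ball) (fun i => Metric.nonempty_ball.2 (by norm_num))
  intro i j hij
  rw [Function.onFun, Set.disjoint_left]
  intro z hzi hzj
  simp only [Metric.mem_ball] at hzi hzj
  have h1 : dist (v i) (v j) < 1 := by
    have := dist_triangle (v i) z (v j)
    rw [dist_comm (v i) z] at this
    linarith
  have h2 : ‖v i - v j‖ ^ 2 = 2 := by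
    rw [norm_sub_sq_real, hv.1 i, hv.1 j, hv.2 hij]
    norm_num
  rw [dist_eq_norm] at h1
  nlinarith [norm_nonneg (v i - v j)]

lemma aux_tensor_memLp {X Y : Type*} [MeasurableSpace X] [MeasurableSpace Y]
    {μ : Measure X} {ν : Measure Y} [SFinite μ] [SFinite ν] {f : X → ℝ} {g : Y → ℝ}
    (hf : MemLp f 2 μ) (hg : MemLp g 2 ν) :
    MemLp (fun p : X × Y => f p.1 * g p.2) 2 (μ.prod ν) := by
  have hm : AEStronglyMeasurable (fun p : X × Y => f p.1 * g p.2) (μ.prod ν) :=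
    hf.1.comp_fst.mul hg.1.comp_snd
  rw [memLp_two_iff_integrable_sq hm]
  have h : (fun p : X × Y => (f p.1 * g p.2) ^ 2)
      = fun p : X × Y => (f p.1 ^ 2) * (g p.2 ^ 2) := by funext p; ring
  rw [h]
  exact hf.integrable_sq.mul_prod hg.integrable_sq

/-- real L2 inner as an integral of products -/
lemma aux_L2_inner {α : Type*} [MeasurableSpace α] {μ : Measure α} (f g : Lp ℝ 2 μ) :
    ⟪f, g⟫ = ∫ a, f a * g a ∂μ := by
  rw [L2.inner_def]; simp [RCLike.inner_apply, mul_comm]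

/-- an L² function orthogonal to every element of a Hilbert basis vanishes a.e. -/
lemma aux_eq_zero_of_forall_inner {α ι : Type*} [MeasurableSpace α] {μ : Measure α}
    (b : HilbertBasis ι ℝ (Lp ℝ 2 μ)) {g : α → ℝ} (hg : MemLp g 2 μ)
    (h : ∀ i, ∫ a, b i a * g a ∂μ = 0) : g =ᵐ[μ] 0 := by
  have h0 : hg.toLp g = 0 := by
    rw [← (b.repr).map_eq_zero_iff]
    ext i
    rw [b.repr_apply_apply, aux_L2_inner]
    have : (fun a => (b i) a * (hg.toLp g) a) =ᵐ[μ] fun a => b i a * g a := by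
      filter_upwards [hg.coeFn_toLp] with a ha
      rw [ha]
    rw [integral_congr_ae this, h i]
    rfl
  have := (hg.toLp_eq_toLp_iff (MemLp.zero (p := 2) (μ := μ))).mp ?_
  · exact this
  · rw [h0, MemLp.toLp_zero]

/-- Tensor products of Hilbert bases of `L²(μ)` and `L²(ν)` form a Hilbert basis
(a complete orthonormal family) of `L²(μ ⊗ ν)`. -/
theorem stmt_4 {X Y : Type*} [MeasurableSpace X] [MeasurableSpace Y]
    (μ : Measure X) (ν : Measure Y) [SigmaFinite μ] [SigmaFinite ν]
    [TopologicalSpace.SeparableSpace (Lp ℝ 2 μ)]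
    [TopologicalSpace.SeparableSpace (Lp ℝ 2 ν)]
    {I J : Type*} (φ : HilbertBasis I ℝ (Lp ℝ 2 μ)) (ψ : HilbertBasis J ℝ (Lp ℝ 2 ν)) :
    ∃ B : I × J → Lp ℝ 2 (μ.prod ν),
      (∀ ij : I × J, ⇑(B ij) =ᵐ[μ.prod ν] fun p => φ ij.1 p.1 * ψ ij.2 p.2) ∧
      Orthonormal ℝ B ∧
      (Submodule.span ℝ (Set.range B)).topologicalClosure = ⊤ := by
  classical
  have hφo := φ.orthonormal
  have hψo := ψ.orthonormal
  have hJ : Countable J := aux_countable_of_orthonormal hψo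
  set B : I × J → Lp ℝ 2 (μ.prod ν) := fun ij =>
    (aux_tensor_memLp (Lp.memLp (φ ij.1)) (Lp.memLp (ψ ij.2))).toLp _ with hBdef
  have hB : ∀ ij : I × J, ⇑(B ij) =ᵐ[μ.prod ν] fun p => φ ij.1 p.1 * ψ ij.2 p.2 :=
    fun ij => MemLp.coeFn_toLp _
  refine ⟨B, hB, ?_, ?_⟩
  · -- orthonormality
    have hinner : ∀ ij kl : I × J,
        ⟪B ij, B kl⟫ = ⟪φ ij.1, φ kl.1⟫ * ⟪ψ ij.2, ψ kl.2⟫ := by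
      intro ij kl
      rw [aux_L2_inner, aux_L2_inner, aux_L2_inner]
      have h1 : (fun z : X × Y => (B ij) z * (B kl) z) =ᵐ[μ.prod ν]
          fun z : X × Y => (φ ij.1 z.1 * φ kl.1 z.1) * (ψ ij.2 z.2 * ψ kl.2 z.2) := by
        filter_upwards [hB ij, hB kl] with z h1 h2
        rw [h1, h2]; ring
      rw [integral_congr_ae h1,
        integral_prod_mul (μ := μ) (ν := ν) (f := fun x => φ ij.1 x * φ kl.1 x)
          (g := fun y => ψ ij.2 y * ψ kl.2 y)]
    rw [orthonormal_iff_ite] at hφo hψo ⊢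
    intro ij kl
    rw [hinner ij kl, hφo ij.1 kl.1, hψo ij.2 kl.2]
    by_cases h1 : ij.1 = kl.1 <;> by_cases h2 : ij.2 = kl.2 <;>
      simp [h1, h2, Prod.ext_iff]
  · -- totality
    rw [Submodule.topologicalClosure_eq_top_iff, Submodule.eq_bot_iff]
    intro F hF
    have hFB : ∀ ij : I × J, ⟪B ij, F⟫ = 0 := fun ij =>
      (Submodule.mem_orthogonal _ F).mp hF (B ij)
        (Submodule.subset_span ⟨ij, rfl⟩)
    -- measurable representative
    have hFm := Lp.memLp F
    set f : X × Y → ℝ := hFm.1.mk _ with hfdef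
    have hfm : StronglyMeasurable f := hFm.1.stronglyMeasurable_mk
    have hfe : ⇑F =ᵐ[μ.prod ν] f := hFm.1.ae_eq_mk
    have hf : MemLp f 2 (μ.prod ν) := hFm.ae_eq hfe
    have hsq : Integrable (fun z => f z ^ 2) (μ.prod ν) := hf.integrable_sq
    -- zero integrals against tensors
    have hint : ∀ ij : I × J,
        ∫ z, f z * (φ ij.1 z.1 * ψ ij.2 z.2) ∂(μ.prod ν) = 0 := by
      intro ij
      have h0 := hFB ij
      rw [aux_L2_inner] at h0
      rw [← h0]
      apply integral_congr_ae
      filter_upwards [hB ij, hfe] with z h1 h2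
      rw [h1, h2]; ring
    have hIntble : ∀ ij : I × J,
        Integrable (fun z => f z * (φ ij.1 z.1 * ψ ij.2 z.2)) (μ.prod ν) := by
      intro ij
      refine (L2.integrable_inner (𝕜 := ℝ) (B ij) F).congr ?_
      filter_upwards [hB ij, hfe] with z h1 h2
      simp only [RCLike.inner_apply, conj_trivial]
      rw [h1, h2]
    -- the slice coefficients
    set g : J → X → ℝ := fun j x => ∫ y, f (x, y) * ψ j y ∂ν with hgdef
    have hgm : ∀ j, AEStronglyMeasurable (g j) μ := by
      intro j
      exact AEStronglyMeasurable.integral_prod_right'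
        (f := fun z : X × Y => f z * ψ j z.2)
        (hfm.aestronglyMeasurable.mul (Lp.aestronglyMeasurable (ψ j)).comp_snd)
    -- a.e. slices of f are in L²(ν)
    have hslice_int : ∀ᵐ x ∂μ, Integrable (fun y => f (x, y) ^ 2) ν :=
      hsq.prod_right_ae
    have hslice_mem : ∀ᵐ x ∂μ, MemLp (fun y => f (x, y)) 2 ν := by
      filter_upwards [hslice_int] with x hx
      exact (memLp_two_iff_integrable_sq
        ((hfm.comp_measurable measurable_prodMk_left).aestronglyMeasurable)).mpr hx
    -- g j ∈ L²(μ)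
    have hgmem : ∀ j, MemLp (g j) 2 μ := by
      intro j
      rw [memLp_two_iff_integrable_sq (hgm j)]
      have hbd : Integrable (fun x => ∫ y, f (x, y) ^ 2 ∂ν) μ :=
        hsq.integral_prod_left
      refine Integrable.mono' hbd (((hgm j).mul (hgm j)).congr
        (Filter.Eventually.of_forall fun x => (sq (g j x)).symm)) ?_
      filter_upwards [hslice_mem] with x hx
      rw [Real.norm_eq_abs, abs_of_nonneg (sq_nonneg _)]
      have h1 : g j x = ⟪hx.toLp _, ψ j⟫ := by
        rw [aux_L2_inner]
        apply integral_congr_ae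
        filter_upwards [hx.coeFn_toLp] with y hy
        rw [hy]
      have h2 : ‖(hx.toLp _ : Lp ℝ 2 ν)‖ ^ 2 = ∫ y, f (x, y) ^ 2 ∂ν := by
        rw [← real_inner_self_eq_norm_sq, aux_L2_inner]
        apply integral_congr_ae
        filter_upwards [hx.coeFn_toLp] with y hy
        rw [hy]; ring
      have h3 : |g j x| ≤ ‖(hx.toLp _ : Lp ℝ 2 ν)‖ := by
        rw [h1]
        calc |⟪hx.toLp _, ψ j⟫| = ‖⟪hx.toLp _, ψ j⟫‖ := rfl
          _ ≤ ‖(hx.toLp _ : Lp ℝ 2 ν)‖ * ‖ψ j‖ := norm_inner_le_norm _ _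
          _ = ‖(hx.toLp _ : Lp ℝ 2 ν)‖ := by rw [ψ.orthonormal.1 j, mul_one]
      rw [← h2]
      nlinarith [abs_nonneg (g j x), sq_abs (g j x)]
    -- each g j vanishes a.e.
    have hg0 : ∀ j, ∀ᵐ x ∂μ, g j x = 0 := by
      intro j
      have := aux_eq_zero_of_forall_inner φ (hgmem j) ?_
      · filter_upwards [this] with x hx
        simpa using hx
      · intro i
        have h0 := hint (i, j)
        rw [integral_prod _ (hIntble (i, j))] at h0
        rw [← h0]
        apply integral_congr_ae
        apply Filter.Eventually.of_forall
        intro x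
        simp only
        rw [show (fun y => f (x, y) * ((φ i) x * (ψ j) y))
            = fun y => (φ i) x * (f (x, y) * (ψ j) y) from funext fun y => by ring,
          integral_const_mul]
    have hg0' : ∀ᵐ x ∂μ, ∀ j, g j x = 0 := ae_all_iff.mpr hg0
    -- a.e. slices vanish
    have hslice0 : ∀ᵐ x ∂μ, ∀ᵐ y ∂ν, f (x, y) = 0 := by
      filter_upwards [hslice_mem, hg0'] with x hx hgx
      have h4 : (fun y => f (x, y)) =ᵐ[ν] 0 := by
        apply aux_eq_zero_of_forall_inner ψ hx
        intro j
        rw [← hgx j]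
        simp only [hgdef]
        apply integral_congr_ae
        apply Filter.Eventually.of_forall
        intro y
        ring
      filter_upwards [h4] with y hy
      simpa using hy
    -- conclude
    have hms : MeasurableSet {z : X × Y | f z = 0} :=
      hfm.measurable (measurableSet_singleton 0)
    have hf0 : ∀ᵐ z ∂(μ.prod ν), f z = 0 :=
      (Measure.ae_prod_iff_ae_ae hms).mpr hslice0
    refine Lp.eq_zero_iff_ae_eq_zero.mpr ?_
    filter_upwards [hfe, hf0] with z h1 h2
    simp [h1, h2]
end

section
/- Let (X, μ) and (Y, ν) be σ-finite measure spaces such that L²(X, μ; ℝ) and L²(Y, ν; ℝ) are separable, and let (ψ_j)_{j ∈ J} be a Hilbert basis of L²(Y, ν; ℝ). Then for every h ∈ L²(X × Y, μ ⊗ ν; ℝ) there exists a unique family (u_j)_{j ∈ J} of elements of L²(X, μ; ℝ) with Σ_{j ∈ J} ‖u_j‖²_{L²(μ)} < ∞ such that h = Σ_{j ∈ J} u_j ⊗ ψ_j, the series converging unconditionally in L²(μ ⊗ ν). -/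
open MeasureTheory ENNReal

noncomputable section
set_option linter.unusedSectionVars false
namespace StmtAux

variable {X Y : Type*} [MeasurableSpace X] [MeasurableSpace Y]
  {μ : Measure X} {ν : Measure Y} [SigmaFinite μ] [SigmaFinite ν]

lemma memℒp_tens (u : Lp ℝ 2 μ) (v : Lp ℝ 2 ν) :
    MemLp (fun p : X × Y => u p.1 * v p.2) 2 (μ.prod ν) := by
  refine ⟨AEStronglyMeasurable.mul (f := fun p : X × Y => u p.1) (g := fun p : X × Y => v p.2)
    ((Lp.aestronglyMeasurable u).comp_quasiMeasurePreserving Measure.quasiMeasurePreserving_fst)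
    ((Lp.aestronglyMeasurable v).comp_quasiMeasurePreserving Measure.quasiMeasurePreserving_snd), ?_⟩
  rw [eLpNorm_eq_lintegral_rpow_enorm_toReal (by norm_num) (by norm_num)]
  have hu := lintegral_rpow_enorm_lt_top_of_eLpNorm_lt_top (f := (u : X → ℝ))
    (by norm_num) (by norm_num) (Lp.eLpNorm_lt_top u)
  have hv := lintegral_rpow_enorm_lt_top_of_eLpNorm_lt_top (f := (v : Y → ℝ))
    (by norm_num) (by norm_num) (Lp.eLpNorm_lt_top v)
  have key : ∫⁻ p : X × Y, ‖u p.1 * v p.2‖ₑ ^ (2:ℝ≥0∞).toReal ∂(μ.prod ν)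
      = (∫⁻ x, ‖u x‖ₑ ^ (2:ℝ≥0∞).toReal ∂μ) *
        ∫⁻ y, ‖v y‖ₑ ^ (2:ℝ≥0∞).toReal ∂ν := by
    rw [← lintegral_prod_mul ((Lp.aestronglyMeasurable u).enorm.pow_const _)
      ((Lp.aestronglyMeasurable v).enorm.pow_const _)]
    congr 1
    ext p
    rw [enorm_mul, ENNReal.mul_rpow_of_nonneg _ _ (by simp)]
  rw [key]
  refine (ENNReal.rpow_lt_top_of_nonneg ?_ (ENNReal.mul_lt_top hu hv).ne)
  norm_num

def tens (u : Lp ℝ 2 μ) (v : Lp ℝ 2 ν) : Lp ℝ 2 (μ.prod ν) :=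
  (memℒp_tens u v).toLp _

lemma tens_ae (u : Lp ℝ 2 μ) (v : Lp ℝ 2 ν) :
    ⇑(tens u v) =ᵐ[μ.prod ν] fun p : X × Y => u p.1 * v p.2 :=
  (memℒp_tens u v).coeFn_toLp

lemma ae_fst {g g' : X → ℝ} (h : g =ᵐ[μ] g') :
    (fun p : X × Y => g p.1) =ᵐ[μ.prod ν] fun p => g' p.1 :=
  h.comp_tendsto Measure.quasiMeasurePreserving_fst.tendsto_ae

lemma ae_snd {g g' : Y → ℝ} (h : g =ᵐ[ν] g') :
    (fun p : X × Y => g p.2) =ᵐ[μ.prod ν] fun p => g' p.2 :=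
  h.comp_tendsto Measure.quasiMeasurePreserving_snd.tendsto_ae

lemma inner_tens (u u' : Lp ℝ 2 μ) (v v' : Lp ℝ 2 ν) :
    (inner ℝ (tens u v) (tens u' v') : ℝ) = inner ℝ u u' * inner ℝ v v' := by
  rw [L2.inner_def, L2.inner_def, L2.inner_def]
  have : ∫ p : X × Y, (inner ℝ (tens u v p) (tens u' v' p) : ℝ) ∂(μ.prod ν)
      = ∫ p : X × Y, (u p.1 * u' p.1) * (v p.2 * v' p.2) ∂(μ.prod ν) := by
    refine integral_congr_ae ?_
    filter_upwards [tens_ae u v, tens_ae u' v'] with p h1 h2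
    simp only [h1, h2, RCLike.inner_apply, starRingEnd_apply, star_trivial]
    ring
  rw [this,
    integral_prod_mul (μ := μ) (ν := ν) (f := fun x => u x * u' x) (g := fun y => v y * v' y)]
  simp [RCLike.inner_apply, starRingEnd_apply, mul_comm]

lemma norm_tens (u : Lp ℝ 2 μ) (v : Lp ℝ 2 ν) : ‖tens u v‖ = ‖u‖ * ‖v‖ := by
  have h1 : ‖tens u v‖ ^ 2 = (‖u‖ * ‖v‖) ^ 2 := by
    rw [← real_inner_self_eq_norm_sq, inner_tens, real_inner_self_eq_norm_sq,
      real_inner_self_eq_norm_sq]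
    ring
  rw [← Real.sqrt_sq (norm_nonneg (tens u v)), h1,
    Real.sqrt_sq (mul_nonneg (norm_nonneg u) (norm_nonneg v))]

lemma tens_add_left (u u' : Lp ℝ 2 μ) (v : Lp ℝ 2 ν) :
    tens (u + u') v = tens u v + tens u' v := by
  refine Lp.ext ?_
  filter_upwards [tens_ae (u + u') v, tens_ae u v, tens_ae u' v,
    Lp.coeFn_add (tens u v) (tens u' v), ae_fst (μ := μ) (ν := ν) (Lp.coeFn_add u u')]
    with p h1 h2 h3 h4 h5
  simp only [h1, h4, h2, h3, Pi.add_apply] at *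
  rw [h5]
  ring

lemma tens_smul_left (c : ℝ) (u : Lp ℝ 2 μ) (v : Lp ℝ 2 ν) :
    tens (c • u) v = c • tens u v := by
  refine Lp.ext ?_
  filter_upwards [tens_ae (c • u) v, tens_ae u v,
    Lp.coeFn_smul c (tens u v), ae_fst (μ := μ) (ν := ν) (Lp.coeFn_smul c u)]
    with p h1 h2 h3 h4
  simp only [h1, h3, Pi.smul_apply, smul_eq_mul, h2] at *
  rw [h4]
  ring

lemma tens_add_right (u : Lp ℝ 2 μ) (v v' : Lp ℝ 2 ν) :
    tens u (v + v') = tens u v + tens u v' := by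
  refine Lp.ext ?_
  filter_upwards [tens_ae u (v + v'), tens_ae u v, tens_ae u v',
    Lp.coeFn_add (tens u v) (tens u v'), ae_snd (μ := μ) (ν := ν) (Lp.coeFn_add v v')]
    with p h1 h2 h3 h4 h5
  simp only [h1, h4, h2, h3, Pi.add_apply] at *
  rw [h5]
  ring

lemma tens_smul_right (c : ℝ) (u : Lp ℝ 2 μ) (v : Lp ℝ 2 ν) :
    tens u (c • v) = c • tens u v := by
  refine Lp.ext ?_
  filter_upwards [tens_ae u (c • v), tens_ae u v,
    Lp.coeFn_smul c (tens u v), ae_snd (μ := μ) (ν := ν) (Lp.coeFn_smul c v)]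
    with p h1 h2 h3 h4
  simp only [h1, h3, Pi.smul_apply, smul_eq_mul, h2] at *
  rw [h4]
  ring

lemma rect_integral_zero (f : Lp ℝ 2 (μ.prod ν))
    (hf : ∀ (u : Lp ℝ 2 μ) (v : Lp ℝ 2 ν), (inner ℝ f (tens u v) : ℝ) = 0)
    {s : Set X} {t : Set Y} (hs : MeasurableSet s) (ht : MeasurableSet t)
    (hμs : μ s ≠ ∞) (hνt : ν t ≠ ∞) :
    ∫ p in s ×ˢ t, f p ∂(μ.prod ν) = 0 := by
  have h0 := hf (indicatorConstLp 2 hs hμs (1:ℝ)) (indicatorConstLp 2 ht hνt (1:ℝ))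
  rw [L2.inner_def] at h0
  rw [← h0, ← integral_indicator (hs.prod ht)]
  refine integral_congr_ae ?_
  filter_upwards [tens_ae (indicatorConstLp 2 hs hμs (1:ℝ)) (indicatorConstLp 2 ht hνt (1:ℝ)),
    ae_fst (μ := μ) (ν := ν) (indicatorConstLp_coeFn (p := 2) (hs := hs) (hμs := hμs) (c := (1:ℝ))),
    ae_snd (μ := μ) (ν := ν) (indicatorConstLp_coeFn (p := 2) (hs := ht) (hμs := hνt) (c := (1:ℝ)))]
    with p h1 h2 h3
  simp only [h1, h2, h3, RCLike.inner_apply, starRingEnd_apply, star_trivial]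
  by_cases h4 : p.1 ∈ s <;> by_cases h5 : p.2 ∈ t <;>
    simp [Set.indicator_apply, Set.mem_prod, h4, h5]

lemma tens_total (f : Lp ℝ 2 (μ.prod ν))
    (hf : ∀ (u : Lp ℝ 2 μ) (v : Lp ℝ 2 ν), (inner ℝ f (tens u v) : ℝ) = 0) : f = 0 := by
  have main : ∀ n : ℕ,
      ∀ᵐ p ∂(μ.prod ν).restrict (spanningSets μ n ×ˢ spanningSets ν n), f p = 0 := by
    intro n
    set R := spanningSets μ n ×ˢ spanningSets ν n with hR
    have hRm : MeasurableSet R := (measurableSet_spanningSets μ n).prod (measurableSet_spanningSets ν n)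
    set ρ := (μ.prod ν).restrict R with hρ
    haveI hfin : IsFiniteMeasure ρ := by
      constructor
      rw [hρ, Measure.restrict_apply_univ, hR, Measure.prod_prod]
      exact ENNReal.mul_lt_top (measure_spanningSets_lt_top μ n)
        (measure_spanningSets_lt_top ν n)
    have hint : Integrable (⇑f) ρ := ((Lp.memLp f).restrict R).integrable (by norm_num)
    have hrectρ : ∀ {s : Set X} {t : Set Y}, MeasurableSet s → MeasurableSet t →
        ∫ p in s ×ˢ t, f p ∂ρ = 0 := by
      intro s t hs ht
      rw [hρ, Measure.restrict_restrict (hs.prod ht), Set.prod_inter_prod]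
      exact rect_integral_zero f hf (hs.inter (measurableSet_spanningSets μ n))
        (ht.inter (measurableSet_spanningSets ν n))
        ((measure_mono Set.inter_subset_right).trans_lt
          (measure_spanningSets_lt_top μ n)).ne
        ((measure_mono Set.inter_subset_right).trans_lt
          (measure_spanningSets_lt_top ν n)).ne
    set κ₁ := ρ.withDensity (fun p => ENNReal.ofReal (f p)) with hκ₁
    set κ₂ := ρ.withDensity (fun p => ENNReal.ofReal (-f p)) with hκ₂
    haveI : IsFiniteMeasure κ₁ := by
      constructor
      rw [hκ₁, withDensity_apply _ MeasurableSet.univ, Measure.restrict_univ]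
      exact (lintegral_mono fun p => Real.ofReal_le_enorm (f p)).trans_lt
        hint.hasFiniteIntegral
    haveI : IsFiniteMeasure κ₂ := by
      constructor
      rw [hκ₂, withDensity_apply _ MeasurableSet.univ, Measure.restrict_univ]
      refine (lintegral_mono fun p => ?_).trans_lt hint.hasFiniteIntegral
      simpa using Real.ofReal_le_enorm (-f p)
    have hAearly : ∀ {s : Set X} {t : Set Y}, MeasurableSet s → MeasurableSet t →
        κ₁ (s ×ˢ t) = κ₂ (s ×ˢ t) := by
      intro s t hs ht
      have hint' : Integrable (⇑f) (ρ.restrict (s ×ˢ t)) := hint.restrict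
      have h1 := integral_eq_lintegral_pos_part_sub_lintegral_neg_part hint'
      rw [hrectρ hs ht] at h1
      have e1 : κ₁ (s ×ˢ t) = ∫⁻ a, ENNReal.ofReal (f a) ∂ρ.restrict (s ×ˢ t) := by
        rw [hκ₁, withDensity_apply _ (hs.prod ht)]
      have e2 : κ₂ (s ×ˢ t) = ∫⁻ a, ENNReal.ofReal (-f a) ∂ρ.restrict (s ×ˢ t) := by
        rw [hκ₂, withDensity_apply _ (hs.prod ht)]
      rw [← e1, ← e2] at h1
      exact (ENNReal.toReal_eq_toReal_iff' (measure_ne_top κ₁ _) (measure_ne_top κ₂ _)).mp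
        (by linarith)
    have hκeq : κ₁ = κ₂ := by
      refine MeasureTheory.ext_of_generate_finite _ generateFrom_prod.symm isPiSystem_prod ?_ ?_
      · rintro A ⟨s, hs, t, ht, rfl⟩
        exact hAearly hs ht
      · have := hAearly MeasurableSet.univ MeasurableSet.univ
        rwa [Set.univ_prod_univ] at this
    have hzero : ∀ A : Set (X × Y), MeasurableSet A → ρ A < ∞ → ∫ p in A, f p ∂ρ = 0 := by
      intro A hA _
      have h1 := integral_eq_lintegral_pos_part_sub_lintegral_neg_part
        (hint.restrict (s := A))
      have e1 : κ₁ A = ∫⁻ a, ENNReal.ofReal (f a) ∂ρ.restrict A := withDensity_apply _ hA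
      have e2 : κ₂ A = ∫⁻ a, ENNReal.ofReal (-f a) ∂ρ.restrict A := withDensity_apply _ hA
      rw [← e1, ← e2, ← hκeq] at h1
      simp [h1]
    exact hint.ae_eq_zero_of_forall_setIntegral_eq_zero hzero
  have hU : (⋃ n, spanningSets μ n ×ˢ spanningSets ν n) = Set.univ := by
    rw [Set.iUnion_prod_of_monotone (monotone_spanningSets μ) (monotone_spanningSets ν),
      iUnion_spanningSets, iUnion_spanningSets, Set.univ_prod_univ]
  have hae : ⇑f =ᵐ[μ.prod ν] 0 := by
    have h2 := (ae_restrict_iUnion_iff (fun n => spanningSets μ n ×ˢ spanningSets ν n)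
      (fun p => f p = 0)).mpr main
    rwa [hU, Measure.restrict_univ] at h2
  exact Lp.ext (hae.trans (Lp.coeFn_zero ℝ 2 (μ.prod ν)).symm)


def tensCLM (u : Lp ℝ 2 μ) : Lp ℝ 2 ν →L[ℝ] Lp ℝ 2 (μ.prod ν) :=
  LinearMap.mkContinuous
    { toFun := fun v => tens u v
      map_add' := tens_add_right u
      map_smul' := fun c v => tens_smul_right c u v } ‖u‖
    fun v => le_of_eq (norm_tens u v)

lemma tensCLM_apply (u : Lp ℝ 2 μ) (v : Lp ℝ 2 ν) : tensCLM u v = tens u v := rfl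

end StmtAux
end

open MeasureTheory

/-- Every `h ∈ L²(μ ⊗ ν)` has a unique expansion `h = Σ_j u_j ⊗ ψ_j` along a Hilbert
basis `(ψ_j)` of `L²(ν)`, with `Σ_j ‖u_j‖² < ∞` and unconditional convergence. -/
theorem stmt_5 {X Y : Type*} [MeasurableSpace X] [MeasurableSpace Y]
    (μ : Measure X) (ν : Measure Y) [SigmaFinite μ] [SigmaFinite ν]
    [TopologicalSpace.SeparableSpace (Lp ℝ 2 μ)]
    [TopologicalSpace.SeparableSpace (Lp ℝ 2 ν)]
    {J : Type*} (ψ : HilbertBasis J ℝ (Lp ℝ 2 ν))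
    (h : Lp ℝ 2 (μ.prod ν)) :
    ∃! U : J → Lp ℝ 2 μ,
      (Summable fun j => ‖U j‖ ^ 2) ∧
      ∃ T : J → Lp ℝ 2 (μ.prod ν),
        (∀ j, ⇑(T j) =ᵐ[μ.prod ν] fun p => U j p.1 * ψ j p.2) ∧ HasSum T h := by
  classical
  let V : ∀ _ : J, Lp ℝ 2 μ →ₗᵢ[ℝ] Lp ℝ 2 (μ.prod ν) := fun j =>
    { toFun := fun u => StmtAux.tens u (ψ j)
      map_add' := fun u u' => StmtAux.tens_add_left u u' (ψ j)
      map_smul' := fun c u => StmtAux.tens_smul_left c u (ψ j)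
      norm_map' := fun u => by
        show ‖StmtAux.tens u (ψ j)‖ = ‖u‖
        rw [StmtAux.norm_tens, ψ.orthonormal.1 j, mul_one] }
  have hortho : OrthogonalFamily ℝ (fun _ : J => Lp ℝ 2 μ) V := by
    intro i j hij u v
    show (inner ℝ (StmtAux.tens u (ψ i)) (StmtAux.tens v (ψ j)) : ℝ) = 0
    rw [StmtAux.inner_tens, ψ.orthonormal.2 hij, mul_zero]
  have htotal : ⊤ ≤ (⨆ j, LinearMap.range (V j).toLinearMap).topologicalClosure := by
    rw [top_le_iff, Submodule.topologicalClosure_eq_top_iff, Submodule.eq_bot_iff]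
    intro f hfmem
    have hperp : ∀ (j : J) (u : Lp ℝ 2 μ), (inner ℝ f (StmtAux.tens u (ψ j)) : ℝ) = 0 := by
      intro j u
      have hmem : StmtAux.tens u (ψ j) ∈ ⨆ j, LinearMap.range (V j).toLinearMap :=
        Submodule.mem_iSup_of_mem j (LinearMap.mem_range_self _ u)
      rw [real_inner_comm]
      exact hfmem _ hmem
    have hall : ∀ (u : Lp ℝ 2 μ) (v : Lp ℝ 2 ν), (inner ℝ f (StmtAux.tens u v) : ℝ) = 0 := by
      intro u v
      have hsum := (ψ.hasSum_repr v).mapL (StmtAux.tensCLM u)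
      have hsum2 := hsum.mapL (innerSL ℝ f)
      have hzero : (fun b => (innerSL ℝ f) (StmtAux.tensCLM u (ψ.repr v b • ψ b)))
          = fun _ => (0 : ℝ) := by
        funext b
        rw [innerSL_apply_apply, StmtAux.tensCLM_apply, StmtAux.tens_smul_right,
          real_inner_smul_right, hperp b u, mul_zero]
      rw [hzero] at hsum2
      have h0 := hsum2.unique hasSum_zero
      rwa [innerSL_apply_apply, StmtAux.tensCLM_apply] at h0
    exact StmtAux.tens_total f hall
  have hV : IsHilbertSum ℝ (fun _ : J => Lp ℝ 2 μ) V := IsHilbertSum.mk hortho htotal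
  set w : lp (fun _ : J => Lp ℝ 2 μ) 2 := hV.linearIsometryEquiv h with hw
  have hps : (0 : ℝ) < (2 : ℝ≥0∞).toReal := by norm_num
  refine ⟨fun j => w j, ⟨?_, fun j => V j (w j), fun j => StmtAux.tens_ae _ _, ?_⟩, ?_⟩
  · have hs := (memℓp_gen_iff hps).1 (lp.memℓp w)
    have : ∀ j, ‖w j‖ ^ (2 : ℝ≥0∞).toReal = ‖w j‖ ^ 2 := by
      intro j
      rw [show (2 : ℝ≥0∞).toReal = ((2 : ℕ) : ℝ) by norm_num, Real.rpow_natCast]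
    simpa [this] using hs
  · have := hV.hasSum_linearIsometryEquiv_symm w
    rwa [hw, LinearIsometryEquiv.symm_apply_apply] at this
  · rintro U' ⟨hsum', T', hT'ae, hT'sum⟩
    have hT' : ∀ j, T' j = V j (U' j) := fun j =>
      Lp.ext ((hT'ae j).trans (StmtAux.tens_ae _ _).symm)
    have hmem : Memℓp U' 2 := by
      refine (memℓp_gen_iff hps).2 ?_
      have : ∀ j, ‖U' j‖ ^ (2 : ℝ≥0∞).toReal = ‖U' j‖ ^ 2 := by
        intro j
        rw [show (2 : ℝ≥0∞).toReal = ((2 : ℕ) : ℝ) by norm_num, Real.rpow_natCast]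
      simpa [this] using hsum'
    set w' : lp (fun _ : J => Lp ℝ 2 μ) 2 := ⟨U', hmem⟩ with hw'
    have hsumw' := hV.hasSum_linearIsometryEquiv_symm w'
    have hW : HasSum (fun j => V j (U' j)) h := by
      have : (fun j => V j (U' j)) = T' := by
        funext j; rw [hT' j]
      rwa [this]
    have heq : hV.linearIsometryEquiv.symm w' = h := hsumw'.unique hW
    have hww : w' = w := by
      rw [hw, ← heq, LinearIsometryEquiv.apply_symm_apply]
    funext j
    have : U' j = w' j := rfl
    rw [this, hww]
end

section
/- Let (D, λ) be a σ-finite measure space, n ≥ 1, and let u₁, …, u_n, v₁, …, v_n ∈ L²(D, λ; ℝ). If Σ_{i=1}^n u_i(x) v_i(y) = 0 for λ ⊗ λ-almost every (x,y) ∈ D × D, then Σ_{i=1}^n u_i(x) v_i(x) = 0 for λ-almost every x ∈ D. -/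
open MeasureTheory

private lemma lp_coeFn_sum {D : Type*} [MeasurableSpace D] {lam : Measure D}
    {ι : Type*} (s : Finset ι) (f : ι → Lp ℝ 2 lam) :
    ∀ᵐ x ∂lam, (∑ i ∈ s, f i) x = ∑ i ∈ s, f i x := by
  classical
  induction s using Finset.induction_on with
  | empty =>
    filter_upwards [Lp.coeFn_zero ℝ 2 lam] with x hx
    simpa using hx
  | @insert c s hnot ih =>
    have hadd := Lp.coeFn_add (f c) (∑ i ∈ s, f i)
    filter_upwards [hadd, ih] with x hx hx'
    rw [Finset.sum_insert hnot, Finset.sum_insert hnot, ← hx']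
    exact hx.trans rfl

/-- Well-definedness of the diagonal trace on finite sums of pure tensors: if
`Σ_i u_i(x) v_i(y) = 0` for `λ ⊗ λ`-a.e. `(x,y)`, then `Σ_i u_i(x) v_i(x) = 0` for
`λ`-a.e. `x`. -/
theorem stmt_11 {D : Type*} [MeasurableSpace D] (lam : Measure D) [SigmaFinite lam]
    {n : ℕ} (hn : 1 ≤ n) (u v : Fin n → D → ℝ)
    (hu : ∀ i, MemLp (u i) 2 lam) (hv : ∀ i, MemLp (v i) 2 lam)
    (h : ∀ᵐ q ∂(lam.prod lam), ∑ i : Fin n, u i q.1 * v i q.2 = 0) :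
    ∀ᵐ x ∂lam, ∑ i : Fin n, u i x * v i x = 0 := by
  classical
  set V : Fin n → Lp ℝ 2 lam := fun i => (hv i).toLp (v i) with hVdef
  set S : Submodule ℝ (Lp ℝ 2 lam) := Submodule.span ℝ (Set.range V) with hS
  have hmem : ∀ i, V i ∈ S := fun i => Submodule.subset_span (Set.mem_range_self i)
  have hfd : FiniteDimensional ℝ S :=
    FiniteDimensional.span_of_finite ℝ (Set.finite_range V)
  set k := Module.finrank ℝ S with hk
  let b : Module.Basis (Fin k) ℝ S := Module.finBasis ℝ S
  let a : Fin n → Fin k → ℝ := fun i j => b.repr ⟨V i, hmem i⟩ j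
  -- Step A : for a.e. x, the coefficients vanish
  have hA : ∀ᵐ x ∂lam, ∀ j, ∑ i, u i x * a i j = 0 := by
    have h' := Measure.ae_ae_of_ae_prod h
    filter_upwards [h'] with x hx
    -- the Lp element ∑ i, u i x • V i is zero
    have hLp : (∑ i, u i x • V i) = 0 := by
      apply Lp.ext
      have h1 := lp_coeFn_sum (Finset.univ) (fun i => u i x • V i)
      have h2 : ∀ᵐ y ∂lam, ∀ i : Fin n, (u i x • V i) y = u i x * v i y := by
        rw [ae_all_iff]
        intro i
        filter_upwards [Lp.coeFn_smul (u i x) (V i), (hv i).coeFn_toLp] with y hy hy'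
        simp [hy, hy', smul_eq_mul]
        exact Or.inl hy'
      filter_upwards [h1, h2, hx, Lp.coeFn_zero ℝ 2 lam] with y hy1 hy2 hy3 hy4
      rw [hy1, hy4]
      simpa [hy2] using hy3
    have hSsum : (∑ i, u i x • (⟨V i, hmem i⟩ : S)) = 0 := by
      apply Subtype.ext
      push_cast
      simpa using hLp
    intro j
    have h0 : b.repr (∑ i, u i x • (⟨V i, hmem i⟩ : S)) = 0 := by rw [hSsum]; simp
    rw [map_sum] at h0
    simp_rw [_root_.map_smul] at h0
    have h1 := congrArg (fun z => z j) h0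
    simpa [a, Finsupp.smul_apply, smul_eq_mul] using h1
  -- Step B : v i is a.e. equal to ∑ j, a i j * (b j) x
  have hB : ∀ᵐ x ∂lam, ∀ i, v i x = ∑ j, a i j * ((b j : Lp ℝ 2 lam) x) := by
    rw [ae_all_iff]
    intro i
    have hrepr : (V i) = ∑ j, a i j • ((b j : S) : Lp ℝ 2 lam) := by
      have := b.sum_repr ⟨V i, hmem i⟩
      have := congrArg (Subtype.val) this.symm
      rw [Submodule.coe_sum] at this
      simp only [Submodule.coe_smul] at this
      exact this
    have h1 := lp_coeFn_sum (Finset.univ) (fun j => a i j • ((b j : S) : Lp ℝ 2 lam))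
    have h2 : ∀ᵐ x ∂lam, ∀ j : Fin k, (a i j • ((b j : S) : Lp ℝ 2 lam)) x
        = a i j * ((b j : S) : Lp ℝ 2 lam) x := by
      rw [ae_all_iff]
      intro j
      filter_upwards [Lp.coeFn_smul (a i j) ((b j : S) : Lp ℝ 2 lam)] with x hx
      simp [hx]
    filter_upwards [(hv i).coeFn_toLp, h1, h2] with x hx hx1 hx2
    rw [show v i x = (V i) x from hx.symm, hrepr, hx1]
    simp [hx2]
  -- combine
  filter_upwards [hA, hB] with x hxA hxB
  calc ∑ i, u i x * v i x
      = ∑ i, u i x * ∑ j, a i j * ((b j : Lp ℝ 2 lam) x) := by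
        refine Finset.sum_congr rfl fun i _ => by rw [hxB i]
    _ = ∑ j, (∑ i, u i x * a i j) * ((b j : Lp ℝ 2 lam) x) := by
        simp_rw [Finset.mul_sum, Finset.sum_mul]
        rw [Finset.sum_comm]
        exact Finset.sum_congr rfl fun j _ => Finset.sum_congr rfl fun i _ => by ring
    _ = 0 := by simp [hxA]
end
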